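/- Let X be a set with |X| = 3k and let C be a collection of 3-element subsets of X with |C| = 3k such that every element of X belongs to exactly three members of C. Consider the financial network with banks s_c for c ∈ C, t_x for x ∈ X, and S, T; external assets e_{s_c} = 4 and all other external assets 0; liabilities l_{s_c, t_x} = 1 for each x ∈ c, l_{s_c, S} = Z, l_{t_x, T} = 1, and all other liabilities 0; no default costs (α = β = 1). Then there exists Z_0 such that for all Z ≥ Z_0: there exists a set R of edges such that setting l_{ij} = 0 for all (i,j) ∈ R yields maximal clearing payments with systemic liquidity at least 14k, if and only if there exists C' ⊆ C with |C'| = k whose members are pairwise disjoint (i.e., C' covers every element of X exactly once). -/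

import Mathlib

open Finset

/-- `p` is a proportional clearing payment matrix for the network with external assets `e`,
liabilities `l` and default costs `α, β`. -/
def IsClearing {ι : Type*} [Fintype ι] (α β : ℝ) (e : ι → ℝ) (l : ι → ι → ℝ)
    (p : ι → ι → ℝ) : Prop :=
  (∀ i j, 0 ≤ p i j) ∧ (∀ i j, p i j ≤ l i j) ∧
  (∀ i, (∑ j, l i j) ≤ e i + (∑ j, p j i) → ∀ j, p i j = l i j) ∧
  (∀ i, e i + (∑ j, p j i) < (∑ j, l i j) →
    ∀ j, p i j = (α * e i + β * (∑ k, p k i)) * l i j / (∑ k, l i k))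

/-- `p` is the maximal clearing payment matrix. -/
def IsMaxClearing {ι : Type*} [Fintype ι] (α β : ℝ) (e : ι → ℝ) (l p : ι → ι → ℝ) : Prop :=
  IsClearing α β e l p ∧ ∀ q, IsClearing α β e l q → ∀ i j, q i j ≤ p i j

/-- Systemic liquidity: the sum of all payments. -/
def liquidity {ι : Type*} [Fintype ι] (p : ι → ι → ℝ) : ℝ := ∑ i, ∑ j, p i j

set_option linter.unusedSectionVars false

section RXC3Aux

variable {X : Type*} [Fintype X] [DecidableEq X]

abbrev Bk (C : Finset (Finset X)) : Type _ := {c : Finset X // c ∈ C} ⊕ X ⊕ Fin 2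

variable {C : Finset (Finset X)}

def eF (C : Finset (Finset X)) : Bk C → ℝ := fun b => match b with
  | Sum.inl _ => 4
  | Sum.inr _ => 0

def lF (C : Finset (Finset X)) (Z : ℝ) : Bk C → Bk C → ℝ := fun a b => match a, b with
  | Sum.inl _, Sum.inl _ => 0
  | Sum.inl c, Sum.inr (Sum.inl x) => if x ∈ c.1 then 1 else 0
  | Sum.inl _, Sum.inr (Sum.inr j) => if j = 0 then Z else 0
  | Sum.inr (Sum.inl _), Sum.inl _ => 0
  | Sum.inr (Sum.inl _), Sum.inr (Sum.inl _) => 0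
  | Sum.inr (Sum.inl _), Sum.inr (Sum.inr j) => if j = 1 then 1 else 0
  | Sum.inr (Sum.inr _), _ => 0

variable {Z : ℝ}

@[simp] lemma eF_s (c) : eF C (Sum.inl c) = 4 := rfl
@[simp] lemma eF_r (b) : eF C (Sum.inr b) = 0 := rfl

@[simp] lemma lF_ss (c c') : lF C Z (Sum.inl c) (Sum.inl c') = 0 := rfl
@[simp] lemma lF_st (c x) : lF C Z (Sum.inl c) (Sum.inr (Sum.inl x)) = if x ∈ c.1 then 1 else 0 := rfl
@[simp] lemma lF_sj (c j) : lF C Z (Sum.inl c) (Sum.inr (Sum.inr j)) = if j = 0 then Z else 0 := rfl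
@[simp] lemma lF_ts (x c) : lF C Z (Sum.inr (Sum.inl x)) (Sum.inl c) = 0 := rfl
@[simp] lemma lF_tt (x y) : lF C Z (Sum.inr (Sum.inl x)) (Sum.inr (Sum.inl y)) = 0 := rfl
@[simp] lemma lF_tj (x j) : lF C Z (Sum.inr (Sum.inl x)) (Sum.inr (Sum.inr j)) = if j = 1 then 1 else 0 := rfl
@[simp] lemma lF_j (i b) : lF C Z (Sum.inr (Sum.inr i)) b = 0 := by
  rcases b with c | x | j <;> rfl

lemma lF_col_s (b c) : lF C Z b (Sum.inl c) = 0 := by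
  rcases b with c' | x | j <;> simp

lemma lF_nonneg (hZ : 0 ≤ Z) (i j) : 0 ≤ lF C Z i j := by
  rcases i with c | x | i <;> rcases j with c' | y | j <;> simp <;> split_ifs <;> norm_num
  exact hZ

/-- the liability matrix after removing the edges in `R`. -/
def lRm (C : Finset (Finset X)) (Z : ℝ) (R : Finset (Bk C × Bk C)) : Bk C → Bk C → ℝ :=
  fun i j => if (i, j) ∈ R then 0 else lF C Z i j

variable {R : Finset (Bk C × Bk C)}

lemma lRm_nonneg (hZ : 0 ≤ Z) (i j) : 0 ≤ lRm C Z R i j := by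
  unfold lRm; split
  · exact le_rfl
  · exact lF_nonneg hZ i j

lemma lRm_le_lF (hZ : 0 ≤ Z) (i j) : lRm C Z R i j ≤ lF C Z i j := by
  unfold lRm; split
  · exact lF_nonneg hZ i j
  · exact le_rfl

/-- the kept hyperedge-to-element edges of `c`. -/
noncomputable def keptC (R : Finset (Bk C × Bk C)) (c : {c : Finset X // c ∈ C}) : Finset X :=
  @Finset.filter X (fun x => ((Sum.inl c : Bk C), (Sum.inr (Sum.inl x) : Bk C)) ∉ R)
    (Classical.decPred _) c.1

lemma keptC_card_le (R : Finset (Bk C × Bk C)) (c : {c : Finset X // c ∈ C}) :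
    (keptC R c).card ≤ c.1.card := by
  exact @Finset.card_filter_le _ _ _ (Classical.decPred _)

lemma lRm_st_eq (c x) : lRm C Z R (Sum.inl c) (Sum.inr (Sum.inl x))
    = if x ∈ keptC R c then 1 else 0 := by
  unfold lRm keptC
  by_cases hR : ((Sum.inl c : Bk C), (Sum.inr (Sum.inl x) : Bk C)) ∈ R <;>
    by_cases hx : x ∈ c.1 <;> simp [hR, hx]

lemma sum_lRm_st (c) : ∑ x : X, lRm C Z R (Sum.inl c) (Sum.inr (Sum.inl x))
    = (keptC R c).card := by
  rw [Finset.sum_congr rfl fun x _ => lRm_st_eq c x]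
  simp

lemma sum_lRm_row_s (c) : ∑ j, lRm C Z R (Sum.inl c) j
    = (if ((Sum.inl c : Bk C), (Sum.inr (Sum.inr 0) : Bk C)) ∈ R then 0 else Z)
      + (keptC R c).card := by
  rw [Fintype.sum_sum_type, Fintype.sum_sum_type, Fin.sum_univ_two]
  rw [sum_lRm_st]
  have h1 : ∑ c' : {c : Finset X // c ∈ C}, lRm C Z R (Sum.inl c) (Sum.inl c') = 0 := by
    apply Finset.sum_eq_zero; intro c' _; simp [lRm]
  have h2 : lRm C Z R (Sum.inl c) (Sum.inr (Sum.inr 1)) = 0 := by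
    simp [lRm]
  have h3 : lRm C Z R (Sum.inl c) (Sum.inr (Sum.inr 0))
      = (if ((Sum.inl c : Bk C), (Sum.inr (Sum.inr 0) : Bk C)) ∈ R then 0 else Z) := by
    simp [lRm]
  rw [h1, h2, h3]; ring

variable {q : Bk C → Bk C → ℝ}

lemma q_zero_of_lF (hZ : (0:ℝ) ≤ Z) (hq : IsClearing 1 1 (eF C) (lRm C Z R) q)
    {i j} (h : lF C Z i j = 0) : q i j = 0 :=
  le_antisymm ((hq.2.1 i j).trans ((lRm_le_lF hZ i j).trans_eq h)) (hq.1 i j)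

lemma q_col_s (hZ : (0:ℝ) ≤ Z) (hq : IsClearing 1 1 (eF C) (lRm C Z R) q) (i c) :
    q i (Sum.inl c) = 0 :=
  q_zero_of_lF hZ hq (lF_col_s i c)

lemma q_in_s (hZ : (0:ℝ) ≤ Z) (hq : IsClearing 1 1 (eF C) (lRm C Z R) q) (c) :
    ∑ j, q j (Sum.inl c) = 0 :=
  Finset.sum_eq_zero fun j _ => q_col_s hZ hq j c

/-- The rows of the s-banks are completely determined. -/
lemma q_row_s (hZ : (13:ℝ) ≤ Z) (hq : IsClearing 1 1 (eF C) (lRm C Z R) q)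
    (c : {c : Finset X // c ∈ C}) (hc3 : c.1.card = 3) (j) :
    q (Sum.inl c) j =
      if ((Sum.inl c : Bk C), (Sum.inr (Sum.inr 0) : Bk C)) ∈ R
      then lRm C Z R (Sum.inl c) j
      else 4 * lRm C Z R (Sum.inl c) j / (Z + (keptC R c).card) := by
  have hZ0 : (0:ℝ) ≤ Z := by linarith
  have hks : ((keptC R c).card : ℝ) ≤ 3 := by
    have := (keptC_card_le R c).trans_eq hc3
    exact_mod_cast this
  have hk0 : (0:ℝ) ≤ ((keptC R c).card : ℝ) := Nat.cast_nonneg _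
  obtain ⟨h0, hle, hsol, hdef⟩ := hq
  by_cases hR : ((Sum.inl c : Bk C), (Sum.inr (Sum.inr 0) : Bk C)) ∈ R
  · rw [if_pos hR]
    apply hsol
    rw [sum_lRm_row_s, if_pos hR, eF_s, q_in_s hZ0 ⟨h0, hle, hsol, hdef⟩]
    linarith
  · rw [if_neg hR]
    have hlt : eF C (Sum.inl c) + ∑ j, q j (Sum.inl c) < ∑ j, lRm C Z R (Sum.inl c) j := by
      rw [sum_lRm_row_s, if_neg hR, eF_s, q_in_s hZ0 ⟨h0, hle, hsol, hdef⟩]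
      linarith
    have h := hdef _ hlt j
    rw [eF_s, q_in_s hZ0 ⟨h0, hle, hsol, hdef⟩, sum_lRm_row_s, if_neg hR] at h
    rw [h]; ring

lemma sum_lRm_row_t (x : X) : ∑ j, lRm C Z R (Sum.inr (Sum.inl x)) j
    = lRm C Z R (Sum.inr (Sum.inl x)) (Sum.inr (Sum.inr 1)) := by
  rw [Fintype.sum_sum_type, Fintype.sum_sum_type, Fin.sum_univ_two]
  have h1 : ∑ c' : {c : Finset X // c ∈ C}, lRm C Z R (Sum.inr (Sum.inl x)) (Sum.inl c') = 0 :=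
    Finset.sum_eq_zero fun c' _ => by simp [lRm]
  have h2 : ∑ y : X, lRm C Z R (Sum.inr (Sum.inl x)) (Sum.inr (Sum.inl y)) = 0 :=
    Finset.sum_eq_zero fun y _ => by simp [lRm]
  have h3 : lRm C Z R (Sum.inr (Sum.inl x)) (Sum.inr (Sum.inr 0)) = 0 := by simp [lRm]
  rw [h1, h2, h3]; ring

lemma q_in_t (hZ : (0:ℝ) ≤ Z) (hq : IsClearing 1 1 (eF C) (lRm C Z R) q) (x : X) :
    ∑ j, q j (Sum.inr (Sum.inl x)) = ∑ c, q (Sum.inl c) (Sum.inr (Sum.inl x)) := by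
  rw [Fintype.sum_sum_type, Fintype.sum_sum_type, Fin.sum_univ_two]
  have h2 : ∑ y : X, q (Sum.inr (Sum.inl y)) (Sum.inr (Sum.inl x)) = 0 :=
    Finset.sum_eq_zero fun y _ => q_zero_of_lF hZ hq (by simp)
  have h3 : ∀ i : Fin 2, q (Sum.inr (Sum.inr i)) (Sum.inr (Sum.inl x)) = 0 :=
    fun i => q_zero_of_lF hZ hq (by simp)
  rw [h2, h3 0, h3 1]; ring

lemma q_t_le_one (hZ : (0:ℝ) ≤ Z) (hq : IsClearing 1 1 (eF C) (lRm C Z R) q) (x : X) :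
    q (Sum.inr (Sum.inl x)) (Sum.inr (Sum.inr 1)) ≤ 1 := by
  refine (hq.2.1 _ _).trans ((lRm_le_lF hZ _ _).trans ?_)
  simp

lemma q_t_le_in (hZ : (0:ℝ) ≤ Z) (hq : IsClearing 1 1 (eF C) (lRm C Z R) q) (x : X) :
    q (Sum.inr (Sum.inl x)) (Sum.inr (Sum.inr 1))
      ≤ ∑ c, q (Sum.inl c) (Sum.inr (Sum.inl x)) := by
  obtain ⟨h0, hle, hsol, hdef⟩ := hq
  have hIn : (0:ℝ) ≤ ∑ c, q (Sum.inl c) (Sum.inr (Sum.inl x)) :=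
    Finset.sum_nonneg fun c _ => h0 _ _
  rcases le_or_gt (∑ j, lRm C Z R (Sum.inr (Sum.inl x)) j)
      (eF C (Sum.inr (Sum.inl x)) + ∑ j, q j (Sum.inr (Sum.inl x))) with hs | hs
  · rw [hsol _ hs _]
    calc lRm C Z R (Sum.inr (Sum.inl x)) (Sum.inr (Sum.inr 1))
        = ∑ j, lRm C Z R (Sum.inr (Sum.inl x)) j := (sum_lRm_row_t x).symm
      _ ≤ eF C (Sum.inr (Sum.inl x)) + ∑ j, q j (Sum.inr (Sum.inl x)) := hs
      _ = ∑ c, q (Sum.inl c) (Sum.inr (Sum.inl x)) := by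
          rw [eF_r, q_in_t hZ ⟨h0, hle, hsol, hdef⟩]; ring
  · rw [hdef _ hs _]
    rw [eF_r, q_in_t hZ ⟨h0, hle, hsol, hdef⟩, sum_lRm_row_t] at hs ⊢
    set I := ∑ c, q (Sum.inl c) (Sum.inr (Sum.inl x)) with hI
    set d := lRm C Z R (Sum.inr (Sum.inl x)) (Sum.inr (Sum.inr 1)) with hd
    have hdpos : 0 < d := by linarith
    have : (1 * 0 + 1 * I) * d / d = I := by field_simp; ring
    rw [this]

lemma q_row_Sn (hZ : (0:ℝ) ≤ Z) (hq : IsClearing 1 1 (eF C) (lRm C Z R) q) (i : Fin 2) (j) :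
    q (Sum.inr (Sum.inr i)) j = 0 :=
  q_zero_of_lF hZ hq (by simp)

lemma liq_decomp (hZ : (0:ℝ) ≤ Z) (hq : IsClearing 1 1 (eF C) (lRm C Z R) q) :
    liquidity q = (∑ c : {c : Finset X // c ∈ C}, ∑ j, q (Sum.inl c) j)
      + ∑ x : X, q (Sum.inr (Sum.inl x)) (Sum.inr (Sum.inr 1)) := by
  unfold liquidity
  rw [Fintype.sum_sum_type, Fintype.sum_sum_type (f := fun b => ∑ j, q (Sum.inr b) j)]
  have h3 : ∑ i : Fin 2, ∑ j, q (Sum.inr (Sum.inr i)) j = 0 :=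
    Finset.sum_eq_zero fun i _ => Finset.sum_eq_zero fun j _ => q_row_Sn hZ hq i j
  have h2 : ∀ x : X, ∑ j, q (Sum.inr (Sum.inl x)) j
      = q (Sum.inr (Sum.inl x)) (Sum.inr (Sum.inr 1)) := by
    intro x
    rw [Fintype.sum_sum_type, Fintype.sum_sum_type, Fin.sum_univ_two]
    have h1 : ∑ c' : {c : Finset X // c ∈ C}, q (Sum.inr (Sum.inl x)) (Sum.inl c') = 0 :=
      Finset.sum_eq_zero fun c' _ => q_zero_of_lF hZ hq (by simp)
    have h2' : ∑ y : X, q (Sum.inr (Sum.inl x)) (Sum.inr (Sum.inl y)) = 0 :=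
      Finset.sum_eq_zero fun y _ => q_zero_of_lF hZ hq (by simp)
    have h3' : q (Sum.inr (Sum.inl x)) (Sum.inr (Sum.inr 0)) = 0 :=
      q_zero_of_lF hZ hq (by simp)
    rw [h1, h2', h3']; ring
  rw [h3, Finset.sum_congr rfl fun x _ => h2 x]; ring

lemma card_subtype_filter (p : Finset X → Prop) [DecidablePred p] :
    ((univ : Finset {c : Finset X // c ∈ C}).filter (fun c => p c.1)).card
      = (C.filter p).card := by
  rw [Finset.univ_eq_attach, Finset.filter_attach, Finset.card_map, Finset.card_attach]

/-- A covering family of `k` triples in a `3k`-element set is pairwise disjoint. -/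
lemma exact_of_cover {k : ℕ} (hX : Fintype.card X = 3 * k) (C' : Finset (Finset X))
    (h3 : ∀ c ∈ C', c.card = 3) (hcard : C'.card = k)
    (hcov : ∀ x : X, ∃ c ∈ C', x ∈ c) :
    ∀ c ∈ C', ∀ c' ∈ C', c ≠ c' → Disjoint c c' := by
  have hsum : ∑ x : X, (C'.filter (fun c => x ∈ c)).card = 3 * k := by
    have h1 : ∀ x : X, (C'.filter (fun c => x ∈ c)).card
        = ∑ c ∈ C', if x ∈ c then 1 else 0 := fun x => Finset.card_filter _ _
    rw [Finset.sum_congr rfl fun x _ => h1 x, Finset.sum_comm]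
    have h2 : ∀ c ∈ C', (∑ x : X, if x ∈ c then 1 else 0) = 3 := by
      intro c hc
      rw [← Finset.card_filter, Finset.filter_univ_mem]
      exact h3 c hc
    rw [Finset.sum_congr rfl h2, Finset.sum_const, hcard, smul_eq_mul, mul_comm]
  have hone : ∀ x : X, 1 ≤ (C'.filter (fun c => x ∈ c)).card := by
    intro x
    obtain ⟨c, hc, hxc⟩ := hcov x
    exact Finset.card_pos.mpr ⟨c, Finset.mem_filter.mpr ⟨hc, hxc⟩⟩
  have key : ∀ x : X, (C'.filter (fun c => x ∈ c)).card = 1 := by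
    by_contra h
    push_neg at h
    obtain ⟨x₀, hx₀⟩ := h
    have hlt : ∑ _x : X, 1 < ∑ x : X, (C'.filter (fun c => x ∈ c)).card := by
      refine Finset.sum_lt_sum (fun x _ => hone x) ⟨x₀, Finset.mem_univ _, ?_⟩
      exact lt_of_le_of_ne (hone x₀) (Ne.symm hx₀)
    rw [Finset.sum_const, smul_eq_mul, mul_one, Finset.card_univ, hX, hsum] at hlt
    exact lt_irrefl _ hlt
  intro c hc c' hc' hne
  rw [Finset.disjoint_left]
  intro x hxc hxc'
  have hsub : ({c, c'} : Finset (Finset X)) ⊆ C'.filter (fun s => x ∈ s) := by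
    intro s hs
    rcases Finset.mem_insert.mp hs with rfl | hs
    · exact Finset.mem_filter.mpr ⟨hc, hxc⟩
    · rw [Finset.mem_singleton] at hs; subst hs
      exact Finset.mem_filter.mpr ⟨hc', hxc'⟩
  have h2 : 2 ≤ (C'.filter (fun s => x ∈ s)).card := by
    calc 2 = ({c, c'} : Finset (Finset X)).card := (Finset.card_pair hne).symm
    _ ≤ _ := Finset.card_le_card hsub
  rw [key x] at h2
  omega

/-- `k` pairwise disjoint triples in a `3k`-element set cover it. -/
lemma cover_of_disjoint {k : ℕ} (hX : Fintype.card X = 3 * k) (C' : Finset (Finset X))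
    (h3 : ∀ c ∈ C', c.card = 3) (hcard : C'.card = k)
    (hdisj : ∀ c ∈ C', ∀ c' ∈ C', c ≠ c' → Disjoint c c') :
    ∀ x : X, ∃ c ∈ C', x ∈ c := by
  have hcb : (C'.biUnion id).card = 3 * k := by
    rw [show (C'.biUnion id) = C'.biUnion (fun c => c) from rfl, Finset.card_biUnion hdisj]
    rw [Finset.sum_congr rfl h3, Finset.sum_const, hcard, smul_eq_mul, mul_comm]
  have huniv : C'.biUnion id = Finset.univ :=
    Finset.eq_univ_of_card _ (by rw [hcb, hX])
  intro x
  have : x ∈ C'.biUnion id := huniv ▸ Finset.mem_univ x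
  simpa using Finset.mem_biUnion.mp this


/-- the Z-edge of bank `c` is removed. -/
abbrev pD (R : Finset (Bk C × Bk C)) (c : {c : Finset X // c ∈ C}) : Prop :=
  ((Sum.inl c : Bk C), (Sum.inr (Sum.inr 0) : Bk C)) ∈ R

lemma forward_dir {k : ℕ} (hX : Fintype.card X = 3 * k) (hCcard : C.card = 3 * k)
    (hC3 : ∀ c ∈ C, c.card = 3)
    (hcover : ∀ x : X, (C.filter (fun c => x ∈ c)).card = 3)
    (hZ : 36 * (k : ℝ) + 13 ≤ Z)
    (hq : IsClearing 1 1 (eF C) (lRm C Z R) q) (hliq : (14 * k : ℝ) ≤ liquidity q) :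
    ∃ C' ⊆ C, C'.card = k ∧ ∀ c ∈ C', ∀ c' ∈ C', c ≠ c' → Disjoint c c' := by
  have hk0 : (0:ℝ) ≤ (k:ℝ) := Nat.cast_nonneg _
  have hZ13 : (13:ℝ) ≤ Z := by nlinarith
  have hZ0 : (0:ℝ) ≤ Z := by linarith
  have hZpos : (0:ℝ) < Z := by linarith
  classical
  set D : Finset {c : Finset X // c ∈ C} := Finset.univ.filter (pD R) with hDdef
  set m : ℕ := D.card with hm
  have hkc3 : ∀ c : {c : Finset X // c ∈ C}, ((keptC R c).card : ℝ) ≤ 3 := by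
    intro c
    have := (keptC_card_le R c).trans_eq (hC3 c.1 c.2)
    exact_mod_cast this
  have hkc0 : ∀ c : {c : Finset X // c ∈ C}, (0:ℝ) ≤ ((keptC R c).card : ℝ) :=
    fun c => Nat.cast_nonneg _
  have hZkc : ∀ c : {c : Finset X // c ∈ C}, (0:ℝ) < Z + ((keptC R c).card : ℝ) :=
    fun c => by have := hkc0 c; linarith
  have hZkc' : ∀ c : {c : Finset X // c ∈ C}, Z + ((keptC R c).card : ℝ) ≠ 0 :=
    fun c => ne_of_gt (hZkc c)
  have hcards : Fintype.card {c : Finset X // c ∈ C} = 3 * k := by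
    rw [Fintype.card_coe, hCcard]
  have hmm' : m + (Finset.univ.filter (fun c => ¬ pD R c)).card = 3 * k := by
    rw [hm, hDdef, Finset.card_filter_add_card_filter_not, Finset.card_univ, hcards]
  set m' : ℕ := (Finset.univ.filter (fun c => ¬ pD R c)).card with hm'
  -- row sums of the s-banks
  have hrow : ∀ c : {c : Finset X // c ∈ C},
      (∑ j, q (Sum.inl c) j) = if pD R c then ((keptC R c).card : ℝ) else 4 := by
    intro c
    by_cases hR : pD R c
    · have hrowj : ∀ j, q (Sum.inl c) j = lRm C Z R (Sum.inl c) j := fun j => by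
        rw [q_row_s hZ13 hq c (hC3 c.1 c.2) j, if_pos hR]
      rw [if_pos hR, Finset.sum_congr rfl fun j _ => hrowj j, sum_lRm_row_s, if_pos hR,
        zero_add]
    · have hrowj : ∀ j, q (Sum.inl c) j
          = 4 * lRm C Z R (Sum.inl c) j / (Z + ((keptC R c).card : ℝ)) := fun j => by
        rw [q_row_s hZ13 hq c (hC3 c.1 c.2) j, if_neg hR]
      rw [if_neg hR, Finset.sum_congr rfl fun j _ => hrowj j, ← Finset.sum_div,
        ← Finset.mul_sum, sum_lRm_row_s, if_neg hR]
      field_simp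
  -- payments of bank c to the element-banks
  have htpay : ∀ c : {c : Finset X // c ∈ C},
      (∑ x : X, q (Sum.inl c) (Sum.inr (Sum.inl x)))
        = if pD R c then ((keptC R c).card : ℝ)
          else 4 * ((keptC R c).card : ℝ) / (Z + ((keptC R c).card : ℝ)) := by
    intro c
    by_cases hR : pD R c
    · have hrowj : ∀ x : X, q (Sum.inl c) (Sum.inr (Sum.inl x))
          = lRm C Z R (Sum.inl c) (Sum.inr (Sum.inl x)) := fun x => by
        rw [q_row_s hZ13 hq c (hC3 c.1 c.2), if_pos hR]
      rw [if_pos hR, Finset.sum_congr rfl fun x _ => hrowj x, sum_lRm_st]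
    · have hrowj : ∀ x : X, q (Sum.inl c) (Sum.inr (Sum.inl x))
          = 4 * lRm C Z R (Sum.inl c) (Sum.inr (Sum.inl x))
            / (Z + ((keptC R c).card : ℝ)) := fun x => by
        rw [q_row_s hZ13 hq c (hC3 c.1 c.2), if_neg hR]
      rw [if_neg hR, Finset.sum_congr rfl fun x _ => hrowj x, ← Finset.sum_div,
        ← Finset.mul_sum, sum_lRm_st]
  have htpay_le : ∀ c : {c : Finset X // c ∈ C}, ¬ pD R c →
      (∑ x : X, q (Sum.inl c) (Sum.inr (Sum.inl x))) ≤ 12 / Z := by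
    intro c hR
    rw [htpay c, if_neg hR]
    rw [div_le_div_iff₀ (hZkc c) hZpos]
    have h1 := hkc3 c
    have h2 := hkc0 c
    nlinarith
  -- individual entry bound for a bank with the Z-edge kept
  have hentry : ∀ (c : {c : Finset X // c ∈ C}) (x : X), ¬ pD R c →
      q (Sum.inl c) (Sum.inr (Sum.inl x)) ≤ (if x ∈ c.1 then 4 / Z else 0) := by
    intro c x hR
    rw [q_row_s hZ13 hq c (hC3 c.1 c.2), if_neg hR]
    have hl : lRm C Z R (Sum.inl c) (Sum.inr (Sum.inl x)) ≤ if x ∈ c.1 then 1 else 0 :=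
      (lRm_le_lF hZ0 _ _).trans_eq (lF_st c x)
    have hl0 : 0 ≤ lRm C Z R (Sum.inl c) (Sum.inr (Sum.inl x)) := lRm_nonneg hZ0 _ _
    split_ifs at hl ⊢ with hx
    · rw [div_le_div_iff₀ (hZkc c) hZpos]
      have := hkc0 c
      nlinarith
    · have hz : lRm C Z R (Sum.inl c) (Sum.inr (Sum.inl x)) = 0 := le_antisymm hl hl0
      rw [hz]
      simp
  have hentry2 : ∀ (c : {c : Finset X // c ∈ C}) (x : X), pD R c → x ∉ c.1 →
      q (Sum.inl c) (Sum.inr (Sum.inl x)) = 0 := by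
    intro c x hR hx
    exact q_zero_of_lF hZ0 hq (by rw [lF_st, if_neg hx])
  -- totals
  set A : ℝ := ∑ c ∈ D, ((keptC R c).card : ℝ) with hA
  have hA3m : A ≤ 3 * m := by
    calc A ≤ ∑ _c ∈ D, (3:ℝ) := Finset.sum_le_sum fun c _ => hkc3 c
    _ = 3 * m := by rw [Finset.sum_const, hm, nsmul_eq_mul]; ring
  have hA0 : 0 ≤ A := Finset.sum_nonneg fun c _ => hkc0 c
  have hS1 : (∑ c : {c : Finset X // c ∈ C}, ∑ j, q (Sum.inl c) j) = A + 4 * m' := by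
    rw [← Finset.sum_filter_add_sum_filter_not Finset.univ (pD R)
      (fun c => ∑ j, q (Sum.inl c) j)]
    have e1 : ∑ c ∈ Finset.univ.filter (pD R), ∑ j, q (Sum.inl c) j = A := by
      rw [hA, hDdef]
      refine Finset.sum_congr rfl fun c hc => ?_
      rw [hrow c, if_pos (Finset.mem_filter.mp hc).2]
    have e2 : ∑ c ∈ Finset.univ.filter (fun c => ¬ pD R c), ∑ j, q (Sum.inl c) j
        = 4 * m' := by
      rw [Finset.sum_congr rfl fun c hc => by
        rw [hrow c, if_neg (Finset.mem_filter.mp hc).2]]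
      rw [Finset.sum_const, hm', nsmul_eq_mul]; ring
    rw [e1, e2]
  set Tq : ℝ := ∑ x : X, q (Sum.inr (Sum.inl x)) (Sum.inr (Sum.inr 1)) with hTq
  have hT1 : Tq ≤ 3 * k := by
    calc Tq ≤ ∑ _x : X, (1:ℝ) := Finset.sum_le_sum fun x _ => q_t_le_one hZ0 hq x
    _ = 3 * k := by rw [Finset.sum_const, Finset.card_univ, hX, nsmul_eq_mul]; push_cast; ring
  have hT2 : Tq ≤ A + 1 := by
    have s1 : Tq ≤ ∑ x : X, ∑ c, q (Sum.inl c) (Sum.inr (Sum.inl x)) :=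
      Finset.sum_le_sum fun x _ => q_t_le_in hZ0 hq x
    rw [Finset.sum_comm] at s1
    have s2 : (∑ c : {c : Finset X // c ∈ C}, ∑ x : X, q (Sum.inl c) (Sum.inr (Sum.inl x)))
        ≤ A + (m' : ℝ) * (12 / Z) := by
      rw [← Finset.sum_filter_add_sum_filter_not Finset.univ (pD R)
        (fun c => ∑ x : X, q (Sum.inl c) (Sum.inr (Sum.inl x)))]
      have e1 : ∑ c ∈ Finset.univ.filter (pD R),
          ∑ x : X, q (Sum.inl c) (Sum.inr (Sum.inl x)) = A := by
        rw [hA, hDdef]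
        refine Finset.sum_congr rfl fun c hc => ?_
        rw [htpay c, if_pos (Finset.mem_filter.mp hc).2]
      have e2 : ∑ c ∈ Finset.univ.filter (fun c => ¬ pD R c),
          ∑ x : X, q (Sum.inl c) (Sum.inr (Sum.inl x)) ≤ (m' : ℝ) * (12 / Z) := by
        calc _ ≤ ∑ _c ∈ Finset.univ.filter (fun c => ¬ pD R c), (12 / Z) :=
              Finset.sum_le_sum fun c hc => htpay_le c (Finset.mem_filter.mp hc).2
        _ = (m' : ℝ) * (12 / Z) := by rw [Finset.sum_const, hm', nsmul_eq_mul]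
      rw [e1]
      linarith
    have s3 : (m' : ℝ) * (12 / Z) ≤ 1 := by
      have hm'le : (m' : ℝ) ≤ 3 * k := by
        have h' : m' ≤ 3 * k := by omega
        exact_mod_cast h'
      rw [mul_div_assoc']
      rw [div_le_one hZpos]
      nlinarith
    linarith
  have hliq' : (14 * k : ℝ) ≤ A + 4 * m' + Tq := by
    rw [liq_decomp hZ0 hq, hS1] at hliq
    exact hliq
  have hmm'R : (m : ℝ) + (m' : ℝ) = 3 * k := by exact_mod_cast hmm'
  have hmlek : (m : ℝ) ≤ k := by linarith
  have hklem : (k : ℝ) ≤ m := by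
    have h2 : (2 * k : ℝ) ≤ 2 * m + 1 := by linarith
    have h2' : 2 * k ≤ 2 * m + 1 := by exact_mod_cast h2
    have h3 : k ≤ m := by omega
    exact_mod_cast h3
  have hmk : (m : ℝ) = k := le_antisymm hmlek hklem
  have hTq3k : Tq = 3 * k := le_antisymm hT1 (by linarith)
  have htq1 : ∀ x : X, q (Sum.inr (Sum.inl x)) (Sum.inr (Sum.inr 1)) = 1 := by
    by_contra h
    push_neg at h
    obtain ⟨x₀, hx₀⟩ := h
    have hlt : Tq < ∑ _x : X, (1:ℝ) := by
      refine Finset.sum_lt_sum (fun x _ => q_t_le_one hZ0 hq x) ⟨x₀, Finset.mem_univ _, ?_⟩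
      exact lt_of_le_of_ne (q_t_le_one hZ0 hq x₀) hx₀
    rw [Finset.sum_const, Finset.card_univ, hX, nsmul_eq_mul, mul_one, hTq3k] at hlt
    norm_num at hlt
  have hIx : ∀ x : X, (1:ℝ) ≤ ∑ c, q (Sum.inl c) (Sum.inr (Sum.inl x)) := by
    intro x
    have h' := q_t_le_in hZ0 hq x
    rw [htq1 x] at h'
    exact h'
  -- every element is covered by a bank in D
  have hcov : ∀ x : X, ∃ c ∈ D, x ∈ c.1 := by
    intro x
    by_contra h
    push_neg at h
    have hterm : ∀ c : {c : Finset X // c ∈ C},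
        q (Sum.inl c) (Sum.inr (Sum.inl x)) ≤ (if x ∈ c.1 then 4 / Z else 0) := by
      intro c
      by_cases hcD : pD R c
      · have hx : x ∉ c.1 := h c (by rw [hDdef]; exact Finset.mem_filter.mpr ⟨Finset.mem_univ _, hcD⟩)
        rw [hentry2 c x hcD hx, if_neg hx]
      · exact hentry c x hcD
    have hsumle : (∑ c, q (Sum.inl c) (Sum.inr (Sum.inl x))) ≤ 12 / Z := by
      calc (∑ c, q (Sum.inl c) (Sum.inr (Sum.inl x)))
          ≤ ∑ c : {c : Finset X // c ∈ C}, (if x ∈ c.1 then 4 / Z else 0) :=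
            Finset.sum_le_sum fun c _ => hterm c
      _ = ((Finset.univ.filter (fun c : {c : Finset X // c ∈ C} => x ∈ c.1)).card : ℝ)
            * (4 / Z) := by
          rw [← Finset.sum_filter, Finset.sum_const, nsmul_eq_mul]
      _ = 3 * (4 / Z) := by
          rw [card_subtype_filter (fun c => x ∈ c), hcover x]; norm_num
      _ = 12 / Z := by ring
    have h12 : 12 / Z < 1 := by
      rw [div_lt_one hZpos]; linarith
    have := (hIx x).trans hsumle
    linarith
  -- assemble the exact cover
  refine ⟨D.image Subtype.val, ?_, ?_, ?_⟩
  · intro c hc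
    obtain ⟨c', _, rfl⟩ := Finset.mem_image.mp hc
    exact c'.2
  · rw [Finset.card_image_of_injective _ Subtype.val_injective, ← hm]
    exact_mod_cast hmk
  · apply exact_of_cover hX
    · intro c hc
      obtain ⟨c', _, rfl⟩ := Finset.mem_image.mp hc
      exact hC3 c'.1 c'.2
    · rw [Finset.card_image_of_injective _ Subtype.val_injective, ← hm]
      exact_mod_cast hmk
    · intro x
      obtain ⟨c, hcD, hx⟩ := hcov x
      exact ⟨c.1, Finset.mem_image_of_mem _ hcD, hx⟩

lemma lRm_col_s (b c) : lRm C Z R b (Sum.inl c) = 0 := by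
  unfold lRm; rw [lF_col_s]; simp

lemma lRm_row_j (i : Fin 2) (b) : lRm C Z R (Sum.inr (Sum.inr i)) b = 0 := by
  unfold lRm; rw [lF_j]; simp

lemma lRm_zero_of_lF {i j} (h : lF C Z i j = 0) : lRm C Z R i j = 0 := by
  unfold lRm; rw [h]; simp

/-- the removal set for the backward direction: the Z-edges of the banks in the cover. -/
noncomputable def Rb (C : Finset (Finset X)) (C' : Finset (Finset X)) :
    Finset (Bk C × Bk C) :=
  (Finset.univ.filter (fun c : {c : Finset X // c ∈ C} => c.1 ∈ C')).image
    (fun c => ((Sum.inl c : Bk C), (Sum.inr (Sum.inr 0) : Bk C)))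

variable {C' : Finset (Finset X)}

lemma mem_Rb {a b : Bk C} : (a, b) ∈ Rb C C'
    ↔ ∃ c : {c : Finset X // c ∈ C}, c.1 ∈ C' ∧ a = Sum.inl c ∧ b = Sum.inr (Sum.inr 0) := by
  unfold Rb
  constructor
  · intro h
    obtain ⟨c, hc, heq⟩ := Finset.mem_image.mp h
    obtain ⟨h1, h2⟩ := Prod.mk.injEq .. ▸ heq
    exact ⟨c, (Finset.mem_filter.mp hc).2, h1.symm, h2.symm⟩
  · rintro ⟨c, hc, rfl, rfl⟩
    exact Finset.mem_image_of_mem _ (Finset.mem_filter.mpr ⟨Finset.mem_univ _, hc⟩)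

lemma Rb_ne {a b : Bk C} (hb : b ≠ Sum.inr (Sum.inr 0)) : (a, b) ∉ Rb C C' := by
  intro h
  obtain ⟨c, _, _, rfl⟩ := mem_Rb.mp h
  exact hb rfl

lemma Rb_S (c : {c : Finset X // c ∈ C}) : pD (Rb C C') c ↔ c.1 ∈ C' := by
  constructor
  · intro h
    obtain ⟨c', hc', h1, _⟩ := mem_Rb.mp h
    obtain rfl : c = c' := Sum.inl_injective h1
    exact hc'
  · intro h
    exact mem_Rb.mpr ⟨c, h, rfl, rfl⟩

lemma keptC_Rb (c : {c : Finset X // c ∈ C}) : keptC (Rb C C') c = c.1 := by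
  unfold keptC
  ext x
  simp only [Finset.mem_filter]
  exact ⟨fun h => h.1, fun h => ⟨h, Rb_ne (by simp)⟩⟩

lemma lRm_Rb_ne {a b : Bk C} (hb : b ≠ Sum.inr (Sum.inr 0)) :
    lRm C Z (Rb C C') a b = lF C Z a b := if_neg (Rb_ne hb)

/-- the maximal clearing payments for the backward direction. -/
noncomputable def pB (C : Finset (Finset X)) (Z : ℝ) (C' : Finset (Finset X)) :
    Bk C → Bk C → ℝ := fun i j =>
  match i with
  | Sum.inl c => if c.1 ∈ C' then lRm C Z (Rb C C') (Sum.inl c) j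
      else 4 * lRm C Z (Rb C C') (Sum.inl c) j / (Z + 3)
  | Sum.inr (Sum.inl x) => lRm C Z (Rb C C') (Sum.inr (Sum.inl x)) j
  | Sum.inr (Sum.inr _) => 0

@[simp] lemma pB_s (c j) : pB C Z C' (Sum.inl c) j
    = if c.1 ∈ C' then lRm C Z (Rb C C') (Sum.inl c) j
      else 4 * lRm C Z (Rb C C') (Sum.inl c) j / (Z + 3) := rfl
@[simp] lemma pB_t (x j) : pB C Z C' (Sum.inr (Sum.inl x)) j
    = lRm C Z (Rb C C') (Sum.inr (Sum.inl x)) j := rfl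
@[simp] lemma pB_j (i : Fin 2) (j) : pB C Z C' (Sum.inr (Sum.inr i)) j = 0 := rfl

lemma backward_dir {k : ℕ} (hX : Fintype.card X = 3 * k) (hCcard : C.card = 3 * k)
    (hC3 : ∀ c ∈ C, c.card = 3)
    (hsub : C' ⊆ C) (hcard : C'.card = k)
    (hdisj : ∀ c ∈ C', ∀ c' ∈ C', c ≠ c' → Disjoint c c') (hZ13 : (13:ℝ) ≤ Z) :
    IsClearing 1 1 (eF C) (lRm C Z (Rb C C')) (pB C Z C') ∧
    (∀ q, IsClearing 1 1 (eF C) (lRm C Z (Rb C C')) q → ∀ i j, q i j ≤ pB C Z C' i j) ∧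
    liquidity (pB C Z C') = 14 * k := by
  have hZ0 : (0:ℝ) ≤ Z := by linarith
  have hZ3 : (0:ℝ) < Z + 3 := by linarith
  have hkcard : ∀ c : {c : Finset X // c ∈ C}, ((keptC (Rb C C') c).card : ℝ) = 3 := by
    intro c
    rw [keptC_Rb]
    exact_mod_cast hC3 c.1 c.2
  have hcov : ∀ x : X, ∃ c ∈ C', x ∈ c :=
    cover_of_disjoint hX C' (fun c hc => hC3 c (hsub hc)) hcard hdisj
  -- row sums of the liability matrix
  have hLs : ∀ c : {c : Finset X // c ∈ C}, (∑ j, lRm C Z (Rb C C') (Sum.inl c) j)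
      = (if c.1 ∈ C' then 0 else Z) + 3 := by
    intro c
    rw [sum_lRm_row_s, hkcard]
    by_cases hc : c.1 ∈ C'
    · rw [if_pos ((Rb_S c).mpr hc), if_pos hc]
    · rw [if_neg (fun h => hc ((Rb_S c).mp h)), if_neg hc]
  -- incoming payments
  have hin_s : ∀ c : {c : Finset X // c ∈ C}, (∑ j, pB C Z C' j (Sum.inl c)) = 0 := by
    intro c
    refine Finset.sum_eq_zero fun j _ => ?_
    rcases j with c' | x | i
    · rw [pB_s]; split_ifs <;> rw [lRm_col_s] <;> simp
    · rw [pB_t, lRm_col_s]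
    · rw [pB_j]
  have hin_t : ∀ x : X, (∑ j, pB C Z C' j (Sum.inr (Sum.inl x)))
      = ∑ c, pB C Z C' (Sum.inl c) (Sum.inr (Sum.inl x)) := by
    intro x
    rw [Fintype.sum_sum_type, Fintype.sum_sum_type, Fin.sum_univ_two]
    have h2 : ∑ y : X, pB C Z C' (Sum.inr (Sum.inl y)) (Sum.inr (Sum.inl x)) = 0 :=
      Finset.sum_eq_zero fun y _ => by rw [pB_t, lRm_zero_of_lF (by simp)]
    have h3 : ∀ i : Fin 2, pB C Z C' (Sum.inr (Sum.inr i)) (Sum.inr (Sum.inl x)) = 0 :=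
      fun i => pB_j i _
    rw [h2, h3 0, h3 1]; ring
  have hpB0 : ∀ i j, 0 ≤ pB C Z C' i j := by
    intro i j
    rcases i with c | x | i
    · rw [pB_s]
      split_ifs
      · exact lRm_nonneg hZ0 _ _
      · have := lRm_nonneg (R := Rb C C') hZ0 (Sum.inl c) j
        positivity
    · rw [pB_t]; exact lRm_nonneg hZ0 _ _
    · rw [pB_j]
  have hIx : ∀ x : X, (1:ℝ) ≤ ∑ c, pB C Z C' (Sum.inl c) (Sum.inr (Sum.inl x)) := by
    intro x
    obtain ⟨c₀, hc₀, hxc₀⟩ := hcov x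
    have hterm : pB C Z C' (Sum.inl ⟨c₀, hsub hc₀⟩) (Sum.inr (Sum.inl x)) = 1 := by
      rw [pB_s, if_pos hc₀, lRm_Rb_ne (by simp), lF_st, if_pos hxc₀]
    calc (1:ℝ) = pB C Z C' (Sum.inl ⟨c₀, hsub hc₀⟩) (Sum.inr (Sum.inl x)) := hterm.symm
    _ ≤ _ := Finset.single_le_sum (fun c _ => hpB0 _ _) (Finset.mem_univ _)
  have hple : ∀ i j, pB C Z C' i j ≤ lRm C Z (Rb C C') i j := by
    intro i j
    rcases i with c | x | i
    · rw [pB_s]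
      split_ifs
      · exact le_rfl
      · have h0 := lRm_nonneg (R := Rb C C') hZ0 (Sum.inl c) j
        rw [div_le_iff₀ hZ3]
        nlinarith
    · rw [pB_t]
    · rw [pB_j]; exact lRm_nonneg hZ0 _ _
  have hclear : IsClearing 1 1 (eF C) (lRm C Z (Rb C C')) (pB C Z C') := by
    refine ⟨hpB0, hple, ?_, ?_⟩
    · intro i hcond j
      rcases i with c | x | i
      · by_cases hc : c.1 ∈ C'
        · rw [pB_s, if_pos hc]
        · exfalso
          rw [hLs, if_neg hc, eF_s, hin_s] at hcond
          linarith
      · rw [pB_t]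
      · rw [pB_j, lRm_row_j]
    · intro i hcond j
      rcases i with c | x | i
      · by_cases hc : c.1 ∈ C'
        · exfalso
          rw [eF_s, hin_s, hLs, if_pos hc] at hcond
          linarith
        · rw [pB_s, if_neg hc, eF_s, hin_s, hLs, if_neg hc]
          ring
      · exfalso
        rw [eF_r, hin_t, sum_lRm_row_t] at hcond
        have h1 := hIx x
        have h2 : lRm C Z (Rb C C') (Sum.inr (Sum.inl x)) (Sum.inr (Sum.inr 1)) ≤ 1 :=
          (lRm_le_lF hZ0 _ _).trans_eq (by simp)
        linarith
      · exfalso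
        have h1 : (∑ j, lRm C Z (Rb C C') (Sum.inr (Sum.inr i)) j) = 0 :=
          Finset.sum_eq_zero fun j _ => lRm_row_j i j
        have h2 : (0:ℝ) ≤ ∑ j, pB C Z C' j (Sum.inr (Sum.inr i)) :=
          Finset.sum_nonneg fun j _ => hpB0 _ _
        rw [eF_r, h1] at hcond
        linarith
  refine ⟨hclear, ?_, ?_⟩
  · -- maximality
    intro q hq i j
    rcases i with c | x | i
    · rw [q_row_s hZ13 hq c (hC3 c.1 c.2) j, pB_s]
      by_cases hc : c.1 ∈ C'
      · rw [if_pos ((Rb_S c).mpr hc), if_pos hc]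
      · rw [if_neg (fun h => hc ((Rb_S c).mp h)), if_neg hc, hkcard]
    · rw [pB_t]; exact hq.2.1 _ _
    · rw [pB_j]; exact (hq.2.1 _ _).trans_eq (lRm_row_j i j)
  · -- liquidity
    rw [liq_decomp hZ0 hclear]
    have hrow : ∀ c : {c : Finset X // c ∈ C},
        (∑ j, pB C Z C' (Sum.inl c) j) = if c.1 ∈ C' then 3 else 4 := by
      intro c
      by_cases hc : c.1 ∈ C'
      · rw [if_pos hc, Finset.sum_congr rfl fun j _ => by rw [pB_s, if_pos hc], hLs,
          if_pos hc, zero_add]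
      · rw [if_neg hc, Finset.sum_congr rfl fun j _ => by rw [pB_s, if_neg hc],
          ← Finset.sum_div, ← Finset.mul_sum, hLs, if_neg hc]
        field_simp
    have hcard1 : (Finset.univ.filter
        (fun c : {c : Finset X // c ∈ C} => c.1 ∈ C')).card = k := by
      rw [card_subtype_filter (fun c => c ∈ C'), Finset.filter_mem_eq_inter,
        Finset.inter_eq_right.mpr hsub, hcard]
    have hcard2 : (Finset.univ.filter
        (fun c : {c : Finset X // c ∈ C} => ¬ c.1 ∈ C')).card = 2 * k := by
      have htot := Finset.card_filter_add_card_filter_not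
        (s := (Finset.univ : Finset {c : Finset X // c ∈ C}))
        (p := fun c => c.1 ∈ C')
      rw [Finset.card_univ, Fintype.card_coe, hCcard, hcard1] at htot
      omega
    have hsum1 : (∑ c : {c : Finset X // c ∈ C}, ∑ j, pB C Z C' (Sum.inl c) j)
        = 3 * k + 4 * (2 * k) := by
      rw [Finset.sum_congr rfl fun c _ => hrow c,
        ← Finset.sum_filter_add_sum_filter_not Finset.univ (fun c => c.1 ∈ C')]
      have e1 : ∑ c ∈ Finset.univ.filter (fun c : {c : Finset X // c ∈ C} => c.1 ∈ C'),
          (if c.1 ∈ C' then (3:ℝ) else 4) = 3 * k := by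
        rw [Finset.sum_congr rfl fun c hc => if_pos (Finset.mem_filter.mp hc).2,
          Finset.sum_const, hcard1, nsmul_eq_mul]
        ring
      have e2 : ∑ c ∈ Finset.univ.filter (fun c : {c : Finset X // c ∈ C} => ¬ c.1 ∈ C'),
          (if c.1 ∈ C' then (3:ℝ) else 4) = 4 * (2 * k) := by
        rw [Finset.sum_congr rfl fun c hc => if_neg (Finset.mem_filter.mp hc).2,
          Finset.sum_const, hcard2, nsmul_eq_mul]
        push_cast; ring
      rw [e1, e2]
    have hsum2 : (∑ x : X, pB C Z C' (Sum.inr (Sum.inl x)) (Sum.inr (Sum.inr 1)))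
        = 3 * k := by
      have hone : ∀ x : X, pB C Z C' (Sum.inr (Sum.inl x)) (Sum.inr (Sum.inr 1)) = 1 := by
        intro x
        rw [pB_t, lRm_Rb_ne (by simp), lF_tj, if_pos rfl]
      rw [Finset.sum_congr rfl fun x _ => hone x, Finset.sum_const, Finset.card_univ, hX,
        nsmul_eq_mul]
      push_cast; ring
    rw [hsum1, hsum2]
    ring

end RXC3Aux

/-- Correctness of the reduction from RXC3 showing NP-hardness of computing an edge set
whose removal maximizes systemic liquidity.  Banks: `Sum.inl c` is the bank s_c for
`c ∈ C`, `Sum.inr (Sum.inl x)` is the bank t_x for `x ∈ X`, `Sum.inr (Sum.inr 0)` is S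
and `Sum.inr (Sum.inr 1)` is T. -/
theorem rxc3_reduction_debt_removal
    (X : Type*) [Fintype X] [DecidableEq X] (k : ℕ)
    (hX : Fintype.card X = 3 * k)
    (C : Finset (Finset X)) (hCcard : C.card = 3 * k)
    (hC3 : ∀ c ∈ C, c.card = 3)
    (hcover : ∀ x : X, (C.filter (fun c => x ∈ c)).card = 3)
    (e : ({c : Finset X // c ∈ C} ⊕ X ⊕ Fin 2) → ℝ)
    (he : e = fun b => match b with
      | Sum.inl _ => 4
      | Sum.inr _ => 0) :
    ∃ Z₀ : ℝ, ∀ Z : ℝ, Z₀ ≤ Z →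
      ∀ l : ({c : Finset X // c ∈ C} ⊕ X ⊕ Fin 2) →
            ({c : Finset X // c ∈ C} ⊕ X ⊕ Fin 2) → ℝ,
      l = (fun a b => match a, b with
        | Sum.inl c, Sum.inr (Sum.inl x) => if x ∈ c.1 then 1 else 0
        | Sum.inl _, Sum.inr (Sum.inr j) => if j = 0 then Z else 0
        | Sum.inr (Sum.inl _), Sum.inr (Sum.inr j) => if j = 1 then 1 else 0
        | _, _ => 0) →
      ((∃ R : Finset (({c : Finset X // c ∈ C} ⊕ X ⊕ Fin 2) ×
            ({c : Finset X // c ∈ C} ⊕ X ⊕ Fin 2)),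
          ∃ p, IsMaxClearing 1 1 e (fun i j => if (i, j) ∈ R then 0 else l i j) p ∧
            (14 * k : ℝ) ≤ liquidity p)
        ↔ (∃ C' ⊆ C, C'.card = k ∧
            ∀ c ∈ C', ∀ c' ∈ C', c ≠ c' → Disjoint c c')) := by
  subst he
  refine ⟨36 * (k : ℝ) + 13, fun Z hZ l hl => ?_⟩
  have hl' : l = lF C Z := by
    rw [hl]; funext a b
    rcases a with c | x | i <;> rcases b with c' | y | j <;> rfl
  subst hl'
  have hZ13 : (13:ℝ) ≤ Z := by
    have : (0:ℝ) ≤ (k:ℝ) := Nat.cast_nonneg _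
    nlinarith
  constructor
  · rintro ⟨R, p, ⟨hclear, _⟩, hliq⟩
    exact forward_dir hX hCcard hC3 hcover hZ hclear hliq
  · rintro ⟨C', hsub, hcard, hdisj⟩
    obtain ⟨hclear, hmax, hliq⟩ := backward_dir hX hCcard hC3 hsub hcard hdisj hZ13
    exact ⟨Rb C C', pB C Z C', ⟨hclear, hmax⟩, le_of_eq hliq.symm⟩
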